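/- (Combinatorial factorization.) For natural numbers i and m, let h(i,m) denote the number of walks of length m on the nonnegative integers starting at 0, ending at i, with steps +1 or −1, that do not visit 0 at any positive time (i.e., w(j) ≠ 0 for all 1 ≤ j ≤ m). Then for all natural numbers i and n, f(i,n) = Σ_{k=0}^{n} f(0,k)·h(i,n−k). -/

import Mathlib

/-- The number of walks of length `n` on the nonnegative integers starting at `0`,
ending at `i`, with steps `+1` or `-1`. -/
noncomputable def walkCount (i n : ℕ) : ℕ :=
  Nat.card {w : Fin (n + 1) → ℕ //
    w 0 = 0 ∧ w (Fin.last n) = i ∧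
    ∀ k : Fin n, ((w k.succ : ℤ) - (w k.castSucc : ℤ)).natAbs = 1}

/-- The number of walks of length `m` on the nonnegative integers starting at `0`,
ending at `i`, with steps `+1` or `-1`, which do not visit `0` at any positive time. -/
noncomputable def strictWalkCount (i m : ℕ) : ℕ :=
  Nat.card {w : Fin (m + 1) → ℕ //
    w 0 = 0 ∧ w (Fin.last m) = i ∧
    (∀ k : Fin m, ((w k.succ : ℤ) - (w k.castSucc : ℤ)).natAbs = 1) ∧
    ∀ j : Fin (m + 1), j ≠ 0 → w j ≠ 0}


/-- Walk predicate on ℕ-indexed functions, padded with 0 beyond `n`. -/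
def PWalk (i n : ℕ) (w : ℕ → ℕ) : Prop :=
  w 0 = 0 ∧ w n = i ∧ (∀ k, k < n → ((w (k+1) : ℤ) - (w k : ℤ)).natAbs = 1) ∧
    ∀ k, n < k → w k = 0

/-- Strict walk predicate: additionally avoids 0 at positive times. -/
def QWalk (i n : ℕ) (w : ℕ → ℕ) : Prop :=
  PWalk i n w ∧ ∀ j, 0 < j → j ≤ n → w j ≠ 0

lemma finite_pwalk (i n : ℕ) : Finite {w : ℕ → ℕ // PWalk i n w} := by
  classical
  apply Finite.of_injective
    (f := fun ws : {w : ℕ → ℕ // PWalk i n w} =>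
      (fun k : Fin n => decide (ws.1 k < ws.1 (k+1)) : Fin n → Bool))
  rintro ⟨w, h0, hn, hs, hp⟩ ⟨w', h0', hn', hs', hp'⟩ heq
  apply Subtype.ext
  have key : ∀ m, m ≤ n → w m = w' m := by
    intro m
    induction m with
    | zero => intro _; rw [h0, h0']
    | succ m ih =>
      intro hm
      have hmn : m < n := hm
      have ihm := ih (Nat.le_of_lt hmn)
      have h1 := hs m hmn
      have h2 := hs' m hmn
      have hb : (w m < w (m+1)) ↔ (w' m < w' (m+1)) := by
        have := congrFun heq ⟨m, hmn⟩
        simpa using this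
      omega
  funext j
  rcases le_or_gt j n with hj | hj
  · exact key j hj
  · show w j = w' j
    rw [hp j hj, hp' j hj]

lemma finite_qwalk (i n : ℕ) : Finite {w : ℕ → ℕ // QWalk i n w} := by
  have := finite_pwalk i n
  apply Finite.of_injective
    (f := fun ws : {w : ℕ → ℕ // QWalk i n w} =>
      (⟨ws.1, ws.2.1⟩ : {w : ℕ → ℕ // PWalk i n w}))
  intro a b h
  simp only [Subtype.mk.injEq] at h
  exact Subtype.ext h

/-- Transfer from the `Fin`-indexed model to the ℕ-indexed model. -/
def pwalkEquiv (i n : ℕ) :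
    {w : Fin (n + 1) → ℕ //
      w 0 = 0 ∧ w (Fin.last n) = i ∧
      ∀ k : Fin n, ((w k.succ : ℤ) - (w k.castSucc : ℤ)).natAbs = 1} ≃
    {w : ℕ → ℕ // PWalk i n w} where
  toFun ws := ⟨fun j => if hj : j < n + 1 then ws.1 ⟨j, hj⟩ else 0, by
    obtain ⟨w, h0, hn, hs⟩ := ws
    refine ⟨by simpa using h0, ?_, ?_, ?_⟩
    · simp only [Nat.lt_succ_self, dif_pos]
      exact hn
    · intro k hk
      have := hs ⟨k, hk⟩
      simp only [Fin.succ_mk, Fin.castSucc_mk] at this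
      simpa [Nat.lt_succ_of_lt hk, Nat.succ_lt_succ hk] using this
    · intro k hk
      simp [Nat.not_lt.mpr hk, show ¬ (k < n + 1) by omega]⟩
  invFun ws := ⟨fun j => ws.1 j.val, by
    obtain ⟨w, h0, hn, hs, hp⟩ := ws
    refine ⟨by simpa using h0, by simpa using hn, ?_⟩
    intro k
    have := hs k.val k.isLt
    simpa using this⟩
  left_inv ws := by
    apply Subtype.ext
    funext j
    simp [j.isLt, Fin.eta]
  right_inv ws := by
    apply Subtype.ext
    funext j
    rcases lt_or_ge j (n + 1) with hj | hj
    · simp [hj]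
    · simp only [dif_neg (Nat.not_lt.mpr hj)]
      exact (ws.2.2.2.2 j (by omega)).symm

lemma walkCount_eq (i n : ℕ) : walkCount i n = Nat.card {w : ℕ → ℕ // PWalk i n w} :=
  Nat.card_congr (pwalkEquiv i n)

/-- Transfer from the `Fin`-indexed strict model to the ℕ-indexed strict model. -/
def qwalkEquiv (i n : ℕ) :
    {w : Fin (n + 1) → ℕ //
      w 0 = 0 ∧ w (Fin.last n) = i ∧
      (∀ k : Fin n, ((w k.succ : ℤ) - (w k.castSucc : ℤ)).natAbs = 1) ∧
      ∀ j : Fin (n + 1), j ≠ 0 → w j ≠ 0} ≃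
    {w : ℕ → ℕ // QWalk i n w} where
  toFun ws := ⟨fun j => if hj : j < n + 1 then ws.1 ⟨j, hj⟩ else 0, by
    obtain ⟨w, h0, hn, hs, hstr⟩ := ws
    refine ⟨⟨by simpa using h0, ?_, ?_, ?_⟩, ?_⟩
    · simp only [Nat.lt_succ_self, dif_pos]
      exact hn
    · intro k hk
      have := hs ⟨k, hk⟩
      simp only [Fin.succ_mk, Fin.castSucc_mk] at this
      simpa [Nat.lt_succ_of_lt hk, Nat.succ_lt_succ hk] using this
    · intro k hk
      simp [show ¬ (k < n + 1) by omega]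
    · intro j hj hjn
      have hj' : j < n + 1 := by omega
      simp only [dif_pos hj']
      exact hstr ⟨j, hj'⟩ (by simp [Fin.ext_iff]; omega)⟩
  invFun ws := ⟨fun j => ws.1 j.val, by
    obtain ⟨w, ⟨h0, hn, hs, hp⟩, hstr⟩ := ws
    refine ⟨by simpa using h0, by simpa using hn, ?_, ?_⟩
    · intro k
      have := hs k.val k.isLt
      simpa using this
    · intro j hj
      have hj' : 0 < j.val := by
        rcases Nat.eq_zero_or_pos j.val with h | h
        · exact absurd (Fin.ext h) hj
        · exact h
      exact hstr j.val hj' (by omega)⟩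
  left_inv ws := by
    apply Subtype.ext
    funext j
    simp [j.isLt, Fin.eta]
  right_inv ws := by
    apply Subtype.ext
    funext j
    rcases lt_or_ge j (n + 1) with hj | hj
    · simp [hj]
    · simp only [dif_neg (Nat.not_lt.mpr hj)]
      exact (ws.2.1.2.2.2 j (by omega)).symm

lemma strictWalkCount_eq (i n : ℕ) :
    strictWalkCount i n = Nat.card {w : ℕ → ℕ // QWalk i n w} :=
  Nat.card_congr (qwalkEquiv i n)

open Classical in
/-- Index of the last visit to `0` (within `[0, n]`). -/
noncomputable def lastZero (n : ℕ) (w : ℕ → ℕ) : ℕ :=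
  Nat.findGreatest (fun j => w j = 0) n

open Classical in
lemma lastZero_le (n : ℕ) (w : ℕ → ℕ) : lastZero n w ≤ n :=
  Nat.findGreatest_le n

open Classical in
lemma lastZero_spec {n : ℕ} {w : ℕ → ℕ} (h : w 0 = 0) : w (lastZero n w) = 0 :=
  Nat.findGreatest_spec (P := fun j => w j = 0) (Nat.zero_le n) h

open Classical in
lemma le_lastZero {n k : ℕ} {w : ℕ → ℕ} (hk : k ≤ n) (h : w k = 0) : k ≤ lastZero n w :=
  Nat.le_findGreatest (P := fun j => w j = 0) hk h

open Classical in
lemma lastZero_greatest {n j : ℕ} {w : ℕ → ℕ} (h : lastZero n w < j) (hj : j ≤ n) :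
    w j ≠ 0 :=
  Nat.findGreatest_is_greatest (P := fun j => w j = 0) h hj

/-- Splitting a walk at its last visit to `0`. -/
noncomputable def splitEquiv (i n k : ℕ) (hk : k ≤ n) :
    {ws : {w : ℕ → ℕ // PWalk i n w} // lastZero n ws.1 = k} ≃
    ({u : ℕ → ℕ // PWalk 0 k u} × {v : ℕ → ℕ // QWalk i (n - k) v}) where
  toFun ws := by
    obtain ⟨⟨w, h0, hn, hs, hp⟩, hlz⟩ := ws
    have hlz' : lastZero n w = k := hlz
    have hwk : w k = 0 := by
      have := lastZero_spec (n := n) h0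
      rwa [hlz'] at this
    have hgr : ∀ j, k < j → j ≤ n → w j ≠ 0 := by
      intro j hj hjn
      exact lastZero_greatest (by rw [hlz']; exact hj) hjn
    refine (⟨fun j => if j ≤ k then w j else 0, ?_, ?_, ?_, ?_⟩,
            ⟨fun j => if j ≤ n - k then w (k + j) else 0, ⟨?_, ?_, ?_, ?_⟩, ?_⟩)
    · simpa using h0
    · simpa using hwk
    · intro j hj
      beta_reduce
      rw [if_pos (by omega : j + 1 ≤ k), if_pos (by omega : j ≤ k)]
      exact hs j (by omega)
    · intro j hj
      beta_reduce
      rw [if_neg (by omega)]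
    · simpa using hwk
    · beta_reduce
      rw [if_pos le_rfl, show k + (n - k) = n by omega]
      exact hn
    · intro j hj
      beta_reduce
      rw [if_pos (by omega : j + 1 ≤ n - k), if_pos (by omega : j ≤ n - k),
        show k + (j + 1) = (k + j) + 1 by omega]
      exact hs (k + j) (by omega)
    · intro j hj
      beta_reduce
      rw [if_neg (by omega)]
    · intro j hj hjn
      beta_reduce
      rw [if_pos hjn]
      exact hgr (k + j) (by omega) (by omega)
  invFun uv := by
    obtain ⟨⟨u, hu0, huk, hus, hup⟩, ⟨v, ⟨hv0, hvn, hvs, hvp⟩, hvstr⟩⟩ := uv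
    refine ⟨⟨fun j => if j ≤ k then u j else if j ≤ n then v (j - k) else 0,
      ?_, ?_, ?_, ?_⟩, ?_⟩
    · simpa using hu0
    · beta_reduce
      rcases Nat.eq_or_lt_of_le hk with h | h
      · rw [if_pos (by omega : n ≤ k)]
        have hnk : n - k = 0 := by omega
        rw [hnk, hv0] at hvn
        subst h
        rw [huk, ← hvn]
      · rw [if_neg (by omega), if_pos le_rfl]
        exact hvn
    · intro j hj
      beta_reduce
      rcases lt_trichotomy j k with h | h | h
      · rw [if_pos (by omega : j + 1 ≤ k), if_pos (by omega : j ≤ k)]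
        exact hus j h
      · subst h
        rw [if_neg (by omega : ¬ j + 1 ≤ j), if_pos (by omega : j + 1 ≤ n),
          if_pos le_rfl, huk, show j + 1 - j = 1 from by omega]
        have := hvs 0 (by omega)
        rw [hv0] at this
        simpa using this
      · rw [if_neg (by omega : ¬ j + 1 ≤ k), if_pos (by omega : j + 1 ≤ n),
          if_neg (by omega : ¬ j ≤ k), if_pos (by omega : j ≤ n),
          show j + 1 - k = (j - k) + 1 from by omega]
        exact hvs (j - k) (by omega)
    · intro j hj
      beta_reduce
      rw [if_neg (by omega), if_neg (by omega)]
    · -- lastZero = k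
      show lastZero n (fun j => if j ≤ k then u j else if j ≤ n then v (j - k) else 0) = k
      set w : ℕ → ℕ := fun j => if j ≤ k then u j else if j ≤ n then v (j - k) else 0 with hw
      have hwk : w k = 0 := by
        rw [hw]
        beta_reduce
        rw [if_pos le_rfl]
        exact huk
      have h1 : k ≤ lastZero n w := le_lastZero hk hwk
      have h2 : lastZero n w ≤ n := lastZero_le n w
      rcases Nat.eq_or_lt_of_le h1 with h | h
      · exact h.symm
      · exfalso
        have hw0 : w 0 = 0 := by
          rw [hw]
          beta_reduce
          rw [if_pos (Nat.zero_le k)]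
          exact hu0
        have hspec : w (lastZero n w) = 0 := lastZero_spec hw0
        have hne : w (lastZero n w) ≠ 0 := by
          rw [hw]
          beta_reduce
          rw [if_neg (by omega : ¬ lastZero n w ≤ k), if_pos h2]
          exact hvstr (lastZero n w - k) (by omega) (by omega)
        exact hne hspec
  left_inv ws := by
    obtain ⟨⟨w, h0, hn, hs, hp⟩, hlz⟩ := ws
    apply Subtype.ext
    apply Subtype.ext
    show (fun j => if j ≤ k then (if j ≤ k then w j else 0)
      else if j ≤ n then (if j - k ≤ n - k then w (k + (j - k)) else 0) else 0) = w
    funext j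
    beta_reduce
    rcases le_or_gt j k with h | h
    · rw [if_pos h, if_pos h]
    · rw [if_neg (by omega)]
      rcases le_or_gt j n with h' | h'
      · rw [if_pos h', if_pos (by omega : j - k ≤ n - k), show k + (j - k) = j from by omega]
      · rw [if_neg (by omega)]
        exact (hp j h').symm
  right_inv uv := by
    obtain ⟨⟨u, hu0, huk, hus, hup⟩, ⟨v, ⟨hv0, hvn, hvs, hvp⟩, hvstr⟩⟩ := uv
    refine Prod.ext (Subtype.ext ?_) (Subtype.ext ?_)
    · show (fun j => if j ≤ k then (if j ≤ k then u j else if j ≤ n then v (j - k) else 0)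
        else 0) = u
      funext j
      beta_reduce
      rcases le_or_gt j k with h | h
      · rw [if_pos h, if_pos h]
      · rw [if_neg (by omega)]
        exact (hup j h).symm
    · show (fun j => if j ≤ n - k then
        (if k + j ≤ k then u (k + j) else if k + j ≤ n then v (k + j - k) else 0) else 0) = v
      funext j
      beta_reduce
      rcases le_or_gt j (n - k) with h | h
      · rw [if_pos h]
        rcases Nat.eq_zero_or_pos j with h0' | h0'
        · subst h0'
          rw [if_pos (by omega : k + 0 ≤ k), show k + 0 = k from rfl, huk, hv0]
        · rw [if_neg (by omega : ¬ k + j ≤ k), if_pos (by omega : k + j ≤ n),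
            show k + j - k = j from by omega]
      · rw [if_neg (by omega)]
        exact (hvp j (by omega)).symm

theorem walkCount_factorization (i n : ℕ) :
    walkCount i n =
      ∑ k ∈ Finset.range (n + 1), walkCount 0 k * strictWalkCount i (n - k) := by
  classical
  haveI : Finite {w : ℕ → ℕ // PWalk i n w} := finite_pwalk i n
  haveI : Fintype {w : ℕ → ℕ // PWalk i n w} := Fintype.ofFinite _
  set S := {w : ℕ → ℕ // PWalk i n w} with hS
  let f : S → Fin (n + 1) := fun ws => ⟨lastZero n ws.1, Nat.lt_succ_of_le (lastZero_le n ws.1)⟩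
  have step1 : Nat.card S = ∑ k : Fin (n + 1), Nat.card {x : S // f x = k} := by
    rw [Nat.card_congr (Equiv.sigmaFiberEquiv f).symm]
    rw [Nat.card_eq_fintype_card, Fintype.card_sigma]
    simp [Nat.card_eq_fintype_card]
  have step2 : ∀ k : Fin (n + 1),
      Nat.card {x : S // f x = k} =
        Nat.card {u : ℕ → ℕ // PWalk 0 k.val u} * Nat.card {v : ℕ → ℕ // QWalk i (n - k.val) v} := by
    intro k
    have e1 : {x : S // f x = k} ≃ {x : S // lastZero n x.1 = k.val} :=
      Equiv.subtypeEquivRight (fun x => by simp [f, Fin.ext_iff])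
    rw [Nat.card_congr e1, Nat.card_congr (splitEquiv i n k.val (by omega : k.val ≤ n)),
      Nat.card_prod]
  rw [walkCount_eq, ← hS, step1]
  rw [Finset.sum_congr rfl (fun k _ => step2 k)]
  rw [show (∑ k : Fin (n + 1), Nat.card {u : ℕ → ℕ // PWalk 0 k.val u} *
      Nat.card {v : ℕ → ℕ // QWalk i (n - k.val) v}) =
    ∑ k ∈ Finset.range (n + 1), Nat.card {u : ℕ → ℕ // PWalk 0 k u} *
      Nat.card {v : ℕ → ℕ // QWalk i (n - k) v} from
    Fin.sum_univ_eq_sum_range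
      (fun k => Nat.card {u : ℕ → ℕ // PWalk 0 k u} * Nat.card {v : ℕ → ℕ // QWalk i (n - k) v})
      (n + 1)]
  refine Finset.sum_congr rfl fun k _ => ?_
  rw [walkCount_eq, strictWalkCount_eq]
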